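/- arXiv:1205.6627 — 2 statements merged into one kernel-verified Lean document; each statement's English description precedes it below -/
import Mathlib

section
/- Let Y and Z be disjoint subsets of X, let α : Y → R satisfy α y ≠ 0 for all y ∈ Y, and let γ : Z → R. If ⁅Σ_{y∈Y} α y • ι y, Σ_{z∈Z} γ z • ι z⁆ = 0 in L, then for every z ∈ Z with γ z ≠ 0 and every y ∈ Y one has Adj y z. -/
noncomputable section

/-- The Lie ideal of relations of the partially commutative Lie algebra:
it is generated by the brackets `⁅x, y⁆` of generators with `G.Adj x y`. -/
def pcIdeal (R : Type*) [CommRing R] {X : Type*} (G : SimpleGraph X) :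
    LieIdeal R (FreeLieAlgebra R X) :=
  LieSubmodule.lieSpan R (FreeLieAlgebra R X)
    {w | ∃ x y : X, G.Adj x y ∧ w = ⁅FreeLieAlgebra.of R x, FreeLieAlgebra.of R y⁆}

/-- The partially commutative Lie algebra `L_R(X; G)`. -/
abbrev PCLieAlgebra (R : Type*) [CommRing R] (X : Type*) (G : SimpleGraph X) :=
  FreeLieAlgebra R X ⧸ pcIdeal R G

/-- The canonical image `ι x` of a generator `x : X` in `L_R(X; G)`. -/
def pcGen (R : Type*) [CommRing R] {X : Type*} (G : SimpleGraph X) (x : X) :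
    PCLieAlgebra R X G :=
  LieSubmodule.Quotient.mk (N := pcIdeal R G) (FreeLieAlgebra.of R x)

/-- The Lie `R`-subalgebra `⟨Y⟩` of `L_R(X; G)` generated by `{ι y : y ∈ Y}`. -/
def genSpan (R : Type*) [CommRing R] {X : Type*} (G : SimpleGraph X) (Y : Set X) :
    LieSubalgebra R (PCLieAlgebra R X G) :=
  LieSubalgebra.lieSpan R (PCLieAlgebra R X G) (pcGen R G '' Y)

/-- The complement graph on a subset `Y ⊆ X`: distinct vertices of `Y` are adjacent
iff they are not adjacent in `G`. -/
def complOn {X : Type*} (G : SimpleGraph X) (Y : Set X) : SimpleGraph Y where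
  Adj a b := (a : X) ≠ (b : X) ∧ ¬ G.Adj a b
  symm := ⟨fun _ _ h => ⟨fun e => h.1 e.symm, fun e => h.2 (G.symm.symm _ _ e)⟩⟩
  loopless := ⟨fun _ h => h.1 rfl⟩

/-- The vertex set (as a subset of `X`) of a connected component of the
complement graph on `Y`. -/
def compSet {X : Type*} (G : SimpleGraph X) (Y : Set X)
    (c : (complOn G Y).ConnectedComponent) : Set X :=
  {x : X | ∃ hx : x ∈ Y, (complOn G Y).connectedComponentMk ⟨x, hx⟩ = c}

/-- `Y` is the support of `g`: `g ∈ ⟨Y⟩`, and `Y ⊆ Z` whenever `g ∈ ⟨Z⟩`. -/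
def isSupport (R : Type*) [CommRing R] {X : Type*} (G : SimpleGraph X)
    (g : PCLieAlgebra R X G) (Y : Set X) : Prop :=
  g ∈ genSpan R G Y ∧ ∀ Z : Set X, g ∈ genSpan R G Z → Y ⊆ Z

/-- If `Y` and `Z` are disjoint and `⁅Σ_{y∈Y} α y • ι y, Σ_{z∈Z} γ z • ι z⁆ = 0`
with all `α y ≠ 0` on `Y`, then every `z ∈ Z` occurring with nonzero coefficient is
adjacent to every `y ∈ Y`. -/
theorem adj_of_bracket_lin_comb_disjoint
    (R : Type*) [CommRing R] [IsDomain R] (X : Type*) [Fintype X] (G : SimpleGraph X)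
    (Y Z : Finset X) (hYZ : Disjoint Y Z) (α γ : X → R)
    (hα : ∀ y ∈ Y, α y ≠ 0)
    (hbr : ⁅∑ y ∈ Y, α y • pcGen R G y, ∑ z ∈ Z, γ z • pcGen R G z⁆ = 0) :
    ∀ z ∈ Z, γ z ≠ 0 → ∀ y ∈ Y, G.Adj y z := by
  classical
  letI : LieRing (Matrix (Fin 3) (Fin 3) R) := LieRing.ofAssociativeRing
  intro z hz hγz y hy
  by_contra hAdj
  have hyz : y ≠ z := fun h => Finset.disjoint_left.mp hYZ hy (h ▸ hz)
  set E12 : Matrix (Fin 3) (Fin 3) R := Matrix.single 0 1 1 with hE12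
  set E23 : Matrix (Fin 3) (Fin 3) R := Matrix.single 1 2 1 with hE23
  set f : X → Matrix (Fin 3) (Fin 3) R :=
    (fun x => if x = y then E12 else if x = z then E23 else 0) with hf
  set F : FreeLieAlgebra R X →ₗ⁅R⁆ Matrix (Fin 3) (Fin 3) R :=
    FreeLieAlgebra.lift R f with hF
  have hFof : ∀ x, F (FreeLieAlgebra.of R x) = f x := fun x => by
    simp [hF, FreeLieAlgebra.lift_of_apply]
  -- F kills the ideal
  have hker : pcIdeal R G ≤ F.ker := by
    rw [pcIdeal, LieSubmodule.lieSpan_le]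
    rintro w ⟨a, b, hab, rfl⟩
    rw [SetLike.mem_coe, LieHom.mem_ker, LieHom.map_lie, hFof, hFof]
    by_cases ha1 : a = y
    · by_cases hb1 : b = y
      · rw [ha1, hb1, lie_self]
      · by_cases hb2 : b = z
        · exact absurd (ha1 ▸ hb2 ▸ hab) hAdj
        · simp [hf, hb1, hb2]
    · by_cases ha2 : a = z
      · by_cases hb1 : b = y
        · exact absurd (G.adj_symm (ha2 ▸ hb1 ▸ hab)) hAdj
        · by_cases hb2 : b = z
          · rw [ha2, hb2, lie_self]
          · simp [hf, hb1, hb2]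
      · simp [hf, ha1, ha2]
  -- move hbr to the free Lie algebra
  have hmem : ⁅∑ a ∈ Y, α a • FreeLieAlgebra.of R a,
      ∑ a ∈ Z, γ a • FreeLieAlgebra.of R a⁆ ∈ pcIdeal R G := by
    rw [← LieSubmodule.Quotient.mk_eq_zero']
    have e1 : (LieSubmodule.Quotient.mk (N := pcIdeal R G)
        ⁅∑ a ∈ Y, α a • FreeLieAlgebra.of R a, ∑ a ∈ Z, γ a • FreeLieAlgebra.of R a⁆ :
        PCLieAlgebra R X G)
      = ⁅((LieSubmodule.Quotient.mk' (pcIdeal R G) : _ →ₗ[R] PCLieAlgebra R X G)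
            (∑ a ∈ Y, α a • FreeLieAlgebra.of R a)),
         ((LieSubmodule.Quotient.mk' (pcIdeal R G) : _ →ₗ[R] PCLieAlgebra R X G)
            (∑ a ∈ Z, γ a • FreeLieAlgebra.of R a))⁆ :=
      LieSubmodule.Quotient.mk_bracket _ _ _
    rw [e1, map_sum, map_sum]
    simp only [map_smul]
    exact hbr
  have hF0 : F ⁅∑ a ∈ Y, α a • FreeLieAlgebra.of R a,
      ∑ a ∈ Z, γ a • FreeLieAlgebra.of R a⁆ = 0 := LieHom.mem_ker.mp (hker hmem)
  have hFY : F (∑ a ∈ Y, α a • FreeLieAlgebra.of R a) = α y • E12 := by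
    rw [← LieHom.coe_toLinearMap, map_sum]
    simp only [map_smul, LieHom.coe_toLinearMap, hFof]
    have step : ∀ a ∈ Y, α a • f a = if a = y then α y • E12 else 0 := by
      intro a ha
      have haz : a ≠ z := fun h => Finset.disjoint_left.mp hYZ ha (h ▸ hz)
      by_cases h1 : a = y
      · subst h1; simp [hf]
      · simp [hf, h1, haz]
    rw [Finset.sum_congr rfl step, Finset.sum_ite_eq' Y y (fun _ => α y • E12), if_pos hy]
  have hFZ : F (∑ a ∈ Z, γ a • FreeLieAlgebra.of R a) = γ z • E23 := by
    rw [← LieHom.coe_toLinearMap, map_sum]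
    simp only [map_smul, LieHom.coe_toLinearMap, hFof]
    have step : ∀ a ∈ Z, γ a • f a = if a = z then γ z • E23 else 0 := by
      intro a ha
      have hay : a ≠ y := fun h => Finset.disjoint_right.mp hYZ ha (h ▸ hy)
      by_cases h2 : a = z
      · subst h2; simp [hf, hay]
      · simp [hf, h2, hay]
    rw [Finset.sum_congr rfl step, Finset.sum_ite_eq' Z z (fun _ => γ z • E23), if_pos hz]
  rw [LieHom.map_lie, hFY, hFZ] at hF0
  have hF0' : (α y * γ z) • (E12 * E23 - E23 * E12) = 0 := by
    rw [← hF0, Ring.lie_def, smul_sub, Matrix.smul_mul, Matrix.mul_smul, Matrix.smul_mul,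
      Matrix.mul_smul, smul_smul, smul_smul, mul_comm (γ z) (α y)]
  have hmul : E12 * E23 - E23 * E12 = Matrix.single (0 : Fin 3) 2 1 := by
    simp [hE12, hE23]
  rw [hmul] at hF0'
  have hentry : α y * γ z = 0 := by
    have h02 := congrFun (congrFun hF0' 0) 2
    simpa using h02
  rcases mul_eq_zero.mp hentry with h | h
  · exact hα y hy h
  · exact hγz h
end
end

section
/- Let g ∈ L and suppose Y ⊆ X is the support of g, i.e. g ∈ ⟨Y⟩ and Y ⊆ Z for every Z ⊆ X with g ∈ ⟨Z⟩. Let C_1, …, C_p be the connected components of the complement graph on Y. Then there exist elements g_1, …, g_p of L such that g = Σ_{i=1}^p g_i, each g_i lies in the Lie subalgebra ⟨C_i⟩, and C_i is the support of g_i (i.e. g_i ∈ ⟨C_i⟩ and C_i ⊆ Z for every Z ⊆ X with g_i ∈ ⟨Z⟩). -/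
noncomputable section

section Aux

variable {R : Type*} [CommRing R] {X : Type*} {G : SimpleGraph X}

lemma genSpan_mono {Y Z : Set X} (h : Y ⊆ Z) : genSpan R G Y ≤ genSpan R G Z :=
  LieSubalgebra.lieSpan_mono (Set.image_mono h)

lemma pcGen_bracket_eq_zero {x y : X} (h : G.Adj x y) :
    ⁅pcGen R G x, pcGen R G y⁆ = 0 := by
  rw [pcGen, pcGen, ← LieSubmodule.Quotient.mk_bracket, LieSubmodule.Quotient.mk_eq_zero']
  exact LieSubmodule.subset_lieSpan ⟨x, y, h, rfl⟩

/-- The left centralizer of an element, as a Lie subalgebra. -/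
def leftCent (b : PCLieAlgebra R X G) : LieSubalgebra R (PCLieAlgebra R X G) where
  carrier := {a | ⁅a, b⁆ = 0}
  add_mem' := by intro a a' ha ha'; simp only [Set.mem_setOf_eq] at *; rw [add_lie, ha, ha', add_zero]
  zero_mem' := by simp
  smul_mem' := by intro r a ha; simp only [Set.mem_setOf_eq] at *; rw [smul_lie, ha, smul_zero]
  lie_mem' := by
    intro a a' ha ha'; simp only [Set.mem_setOf_eq] at *
    rw [lie_lie, ha, ha', lie_zero, lie_zero, sub_zero]

/-- The right centralizer of an element, as a Lie subalgebra. -/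
def rightCent (a : PCLieAlgebra R X G) : LieSubalgebra R (PCLieAlgebra R X G) where
  carrier := {b | ⁅a, b⁆ = 0}
  add_mem' := by intro b b' hb hb'; simp only [Set.mem_setOf_eq] at *; rw [lie_add, hb, hb', add_zero]
  zero_mem' := by simp
  smul_mem' := by intro r b hb; simp only [Set.mem_setOf_eq] at *; rw [lie_smul, hb, smul_zero]
  lie_mem' := by
    intro b b' hb hb'; simp only [Set.mem_setOf_eq] at *
    rw [leibniz_lie, hb, hb', lie_zero, zero_lie, add_zero]

lemma compSet_subset {Y : Set X} (c : (complOn G Y).ConnectedComponent) :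
    compSet G Y c ⊆ Y := fun _ hx => hx.1

lemma adj_of_ne_comp {Y : Set X} {c d : (complOn G Y).ConnectedComponent} (hcd : c ≠ d)
    {x y : X} (hx : x ∈ compSet G Y c) (hy : y ∈ compSet G Y d) : G.Adj x y := by
  obtain ⟨hxY, hxc⟩ := hx
  obtain ⟨hyY, hyd⟩ := hy
  by_contra hadj
  have hne : x ≠ y := by
    rintro rfl
    exact hcd (hxc ▸ hyd ▸ rfl)
  have : (complOn G Y).Adj ⟨x, hxY⟩ ⟨y, hyY⟩ := ⟨hne, hadj⟩
  exact hcd (hxc ▸ hyd ▸ (SimpleGraph.ConnectedComponent.connectedComponentMk_eq_of_adj this))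

lemma comp_bracket_eq_zero {Y : Set X} {c d : (complOn G Y).ConnectedComponent} (hcd : c ≠ d)
    {a b : PCLieAlgebra R X G} (ha : a ∈ genSpan R G (compSet G Y c))
    (hb : b ∈ genSpan R G (compSet G Y d)) : ⁅a, b⁆ = 0 := by
  have h1 : genSpan R G (compSet G Y c) ≤ leftCent b := by
    rw [genSpan, LieSubalgebra.lieSpan_le]
    rintro _ ⟨x, hx, rfl⟩
    have h2 : genSpan R G (compSet G Y d) ≤ rightCent (pcGen R G x) := by
      rw [genSpan, LieSubalgebra.lieSpan_le]
      rintro _ ⟨y, hy, rfl⟩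
      exact pcGen_bracket_eq_zero (adj_of_ne_comp hcd hx hy)
    exact h2 hb
  exact h1 ha

end Aux

/-- Any `g` with support `Y` decomposes as a sum `g = Σ gᵢ`, where `gᵢ` is supported on
the vertex set of the `i`-th connected component of the complement graph on `Y`. -/
theorem decomposition_along_components
    (R : Type*) [CommRing R] [IsDomain R] (X : Type*) [Fintype X] (G : SimpleGraph X)
    (g : PCLieAlgebra R X G) (Y : Set X) (hY : isSupport R G g Y) :
    ∃ gc : (complOn G Y).ConnectedComponent → PCLieAlgebra R X G,
      g = ∑ᶠ c, gc c ∧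
      ∀ c, gc c ∈ genSpan R G (compSet G Y c) ∧ isSupport R G (gc c) (compSet G Y c) := by
  classical
  letI : Fintype (complOn G Y).ConnectedComponent := Fintype.ofFinite _
  set p : (complOn G Y).ConnectedComponent → Submodule R (PCLieAlgebra R X G) :=
    fun c => (genSpan R G (compSet G Y c)).toSubmodule with hp
  -- the supremum of the component subalgebras is closed under brackets
  have lie_mem_T : ∀ a ∈ ⨆ c, p c, ∀ b ∈ ⨆ c, p c, ⁅a, b⁆ ∈ ⨆ c, p c := by
    intro a ha
    refine Submodule.iSup_induction (motive := fun a => ∀ b ∈ ⨆ c, p c, ⁅a, b⁆ ∈ ⨆ c, p c)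
      p ha ?_ ?_ ?_
    · intro c x hx b hb
      refine Submodule.iSup_induction (motive := fun b => ⁅x, b⁆ ∈ ⨆ c, p c) p hb ?_ ?_ ?_
      · intro d y hy
        by_cases hcd : c = d
        · subst hcd
          exact Submodule.mem_iSup_of_mem c ((genSpan R G (compSet G Y c)).lie_mem hx hy)
        · rw [comp_bracket_eq_zero hcd hx hy]
          exact zero_mem _
      · simp only [lie_zero]; exact zero_mem _
      · intro u v hu hv; simp only [lie_add] at *; exact add_mem hu hv
    · intro b hb; simp only [zero_lie]; exact zero_mem _
    · intro u v hu hv b hb; simp only [add_lie] at *; exact add_mem (hu b hb) (hv b hb)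
  have hg : g ∈ ⨆ c, p c := by
    let T : LieSubalgebra R (PCLieAlgebra R X G) :=
      { (⨆ c, p c : Submodule R (PCLieAlgebra R X G)) with
        lie_mem' := fun {a b} ha hb => lie_mem_T a ha b hb }
    have hsub : genSpan R G Y ≤ T := by
      rw [genSpan, LieSubalgebra.lieSpan_le]
      rintro _ ⟨y, hy, rfl⟩
      have hmem : pcGen R G y ∈
          genSpan R G (compSet G Y ((complOn G Y).connectedComponentMk ⟨y, hy⟩)) :=
        LieSubalgebra.subset_lieSpan ⟨y, ⟨hy, rfl⟩, rfl⟩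
      exact Submodule.mem_iSup_of_mem _ hmem
    exact hsub hY.1
  obtain ⟨f, hfmem, hfsum⟩ := (Submodule.mem_iSup_iff_exists_finsupp p g).mp hg
  have hgsum : g = ∑ c, f c := by
    rw [← hfsum]
    exact Finsupp.sum_fintype _ _ (fun _ => rfl)
  -- disjointness of the component vertex sets
  have hdisj : ∀ {c d : (complOn G Y).ConnectedComponent}, c ≠ d →
      compSet G Y d ⊆ Y \ compSet G Y c := by
    intro c d hcd x hx
    refine ⟨hx.1, fun hxc => hcd ?_⟩
    obtain ⟨h1, e1⟩ := hxc
    obtain ⟨h2, e2⟩ := hx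
    rw [← e1, ← e2]
  refine ⟨fun c => f c, by rw [hgsum, finsum_eq_sum_of_fintype], fun c => ?_⟩
  have hfc : f c ∈ genSpan R G (compSet G Y c) := hfmem c
  refine ⟨hfc, hfc, fun Z hZ x hx => ?_⟩
  -- the rest of the sum is supported away from the component c
  have hrest : ∑ d ∈ Finset.univ.erase c, f d ∈ genSpan R G (Y \ compSet G Y c) := by
    apply sum_mem
    intro d hd
    exact genSpan_mono (hdisj (Finset.ne_of_mem_erase hd).symm) (hfmem d)
  have hgmem : g ∈ genSpan R G (Z ∪ (Y \ compSet G Y c)) := by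
    have : g = f c + ∑ d ∈ Finset.univ.erase c, f d := by
      rw [hgsum, Finset.add_sum_erase _ _ (Finset.mem_univ c)]
    rw [this]
    exact add_mem (genSpan_mono Set.subset_union_left hZ)
      (genSpan_mono Set.subset_union_right hrest)
  rcases hY.2 _ hgmem (compSet_subset c hx) with h | h
  · exact h
  · exact absurd hx h.2
end
end
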